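/- Let G be a finite connected simple graph with a full-dimensional hypercube isometry μ : V → {0,1}^τ, let M be a matching in the semicube graph Sc(G), and let P be the graph on the 2τ semicube-vertices whose edge set is M together with an edge between each pair of complementary semicubes (i,0)–(i,1). Then P contains no cycle. -/

import Mathlib

/-- The semicube `S_{i,χ} = {v | μ_i(v) = χ}` of a hypercube embedding `μ`. -/
def semicube {V ι : Type*} (μ : V → ι → Bool) (i : ι) (χ : Bool) : Set V :=
  {v | μ v i = χ}

/-- The semicube graph `Sc(G)`: vertices are the pairs `(i,χ)` (representing the
semicubes `S_{i,χ}`), with an edge between two distinct pairs exactly when the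
corresponding semicubes cover all vertices and intersect nontrivially. -/
def semicubeGraph {V ι : Type*} (μ : V → ι → Bool) : SimpleGraph (ι × Bool) where
  Adj p q := p ≠ q ∧
    semicube μ p.1 p.2 ∪ semicube μ q.1 q.2 = Set.univ ∧
    (semicube μ p.1 p.2 ∩ semicube μ q.1 q.2).Nonempty
  symm := by
    constructor
    rintro p q ⟨h1, h2, h3⟩
    exact ⟨h1.symm, by rwa [Set.union_comm], by rwa [Set.inter_comm]⟩
  loopless := by constructor; rintro p ⟨h1, -⟩; exact h1 rfl

/-- `M` is a matching in the graph `H`: a finite set of edges of `H`,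
no two of which share an endpoint. -/
def IsMatchingIn {α : Type*} (H : SimpleGraph α) (M : Finset (Sym2 α)) : Prop :=
  (∀ e ∈ M, e ∈ H.edgeSet) ∧
    ∀ e ∈ M, ∀ f ∈ M, e ≠ f → ∀ a, a ∈ e → a ∉ f

/-- The graph `P` on the semicube-vertices `(i,χ)` whose edges are the edges of a
matching `M` together with an edge between each pair of complementary semicubes
`(i,0)–(i,1)` (i.e. two distinct vertices with the same first coordinate). -/
def augmentedPathGraph {ι : Type*} (M : Finset (Sym2 (ι × Bool))) :
    SimpleGraph (ι × Bool) where
  Adj p q := p ≠ q ∧ (s(p, q) ∈ M ∨ p.1 = q.1)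
  symm := by
    constructor
    rintro p q ⟨h1, h2⟩
    refine ⟨h1.symm, ?_⟩
    rcases h2 with h | h
    · left; rwa [Sym2.eq_swap]
    · right; exact h.symm
  loopless := by constructor; rintro p ⟨h1, -⟩; exact h1 rfl

/-- If `μ : V → {0,1}^τ` is a full-dimensional hypercube isometry of the finite
connected graph `G`, `M` is a matching in `Sc(G)`, and `P` is the graph formed by
`M` together with the complement edges `(i,0)–(i,1)`, then `P` contains no cycle. -/
theorem augmented_matching_graph_acyclic
    {V : Type*} [Fintype V] [DecidableEq V]
    (G : SimpleGraph V) (hconn : G.Connected)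
    (τ : ℕ) (μ : V → Fin τ → Bool)
    (hiso : ∀ u v : V, hammingDist (μ u) (μ v) = G.dist u v)
    (hfull : ∀ i : Fin τ, (∃ v, μ v i = false) ∧ (∃ v, μ v i = true))
    (M : Finset (Sym2 (Fin τ × Bool)))
    (hM : IsMatchingIn (semicubeGraph μ) M) :
    (augmentedPathGraph M).IsAcyclic := by
  classical
  intro v c hc
  set F : Fin τ × Bool → ℕ := fun p => (semicube μ p.1 p.2).ncard with hFdef
  have hcompl : ∀ (i : Fin τ) (b : Bool), semicube μ i (!b) = (semicube μ i b)ᶜ := by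
    intro i b
    ext w
    simp only [semicube, Set.mem_setOf_eq, Set.mem_compl_iff]
    cases b <;> simp
  have hsum : ∀ (i : Fin τ) (b : Bool), F (i, b) + F (i, !b) = Nat.card V := by
    intro i b
    show (semicube μ i b).ncard + (semicube μ i (!b)).ncard = Nat.card V
    rw [hcompl]
    exact Set.ncard_add_ncard_compl _
  have hmatch : ∀ p q : Fin τ × Bool, s(p, q) ∈ M → Nat.card V < F p + F q := by
    intro p q hpq
    have hadj := hM.1 _ hpq
    rw [SimpleGraph.mem_edgeSet] at hadj
    obtain ⟨-, hcover, hint⟩ := hadj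
    have h1 := Set.ncard_union_add_ncard_inter (semicube μ p.1 p.2) (semicube μ q.1 q.2)
    rw [hcover, Set.ncard_univ] at h1
    have h2 : 0 < (semicube μ p.1 p.2 ∩ semicube μ q.1 q.2).ncard :=
      (Set.ncard_pos).2 hint
    show Nat.card V < (semicube μ p.1 p.2).ncard + (semicube μ q.1 q.2).ncard
    omega
  have claim : ∀ x ∈ c.support,
      (x.1, !x.2) ∈ c.support ∧ ∃ w ∈ c.support, s(x, w) ∈ M := by
    intro x hx
    have hc₂ : (c.rotate x hx).IsCycle := hc.rotate hx
    have hrot := c.rotate_edges x hx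
    have h3 : 3 ≤ (c.rotate x hx).length := hc₂.three_le_length
    obtain ⟨a, hadj_a, p, hcons⟩ := SimpleGraph.Walk.not_nil_iff.mp hc₂.not_nil
    rw [hcons] at hc₂ h3 hrot
    rw [SimpleGraph.Walk.cons_isCycle_iff] at hc₂
    obtain ⟨hpath, hnotmem⟩ := hc₂
    have hpn : ¬ p.reverse.Nil := by
      rw [SimpleGraph.Walk.not_nil_iff_lt_length, SimpleGraph.Walk.length_reverse]
      simp only [SimpleGraph.Walk.length_cons] at h3
      omega
    obtain ⟨b, hadj_b, q, hq⟩ := SimpleGraph.Walk.not_nil_iff.mp hpn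
    have hb_edge : s(x, b) ∈ p.edges := by
      have hmem : s(x, b) ∈ p.reverse.edges := by rw [hq]; simp
      rwa [SimpleGraph.Walk.edges_reverse, List.mem_reverse] at hmem
    have ha_e : s(x, a) ∈ (SimpleGraph.Walk.cons hadj_a p).edges := by simp
    have hb_e : s(x, b) ∈ (SimpleGraph.Walk.cons hadj_a p).edges := by
      rw [SimpleGraph.Walk.edges_cons]
      exact List.mem_cons_of_mem _ hb_edge
    have haS : a ∈ c.support :=
      SimpleGraph.Walk.snd_mem_support_of_mem_edges c (hrot.mem_iff.mp ha_e)
    have hbS : b ∈ c.support :=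
      SimpleGraph.Walk.snd_mem_support_of_mem_edges c (hrot.mem_iff.mp hb_e)
    have hab : a ≠ b := by
      intro h
      exact hnotmem (h ▸ hb_edge)
    have hflip : ∀ y : Fin τ × Bool, (augmentedPathGraph M).Adj x y → s(x, y) ∉ M →
        y = (x.1, !x.2) := by
      rintro ⟨y1, y2⟩ ⟨hne, hor⟩ hnm
      rcases hor with h | h
      · exact absurd h hnm
      · obtain ⟨x1, x2⟩ := x
        simp only at h
        subst h
        revert hne
        cases x2 <;> cases y2 <;> simp
    by_cases hma : s(x, a) ∈ M
    · have hb_not : s(x, b) ∉ M := by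
        intro hmb
        have hne : s(x, a) ≠ s(x, b) := by
          intro h
          exact hab ((Sym2.congr_right).mp h)
        exact hM.2 _ hma _ hmb hne x (by simp) (by simp)
      have hbflip := hflip b hadj_b hb_not
      exact ⟨hbflip ▸ hbS, a, haS, hma⟩
    · by_cases hmb : s(x, b) ∈ M
      · have haflip := hflip a hadj_a hma
        exact ⟨haflip ▸ haS, b, hbS, hmb⟩
      · have h1 := hflip a hadj_a hma
        have h2 := hflip b hadj_b hmb
        exact absurd (h1.trans h2.symm) hab
    -- end claim
  obtain ⟨u, huF, hmaxu⟩ := Finset.exists_max_image c.support.toFinset F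
    ⟨v, List.mem_toFinset.mpr c.start_mem_support⟩
  have hu : u ∈ c.support := List.mem_toFinset.mp huF
  obtain ⟨hflipmem, -⟩ := claim u hu
  obtain ⟨-, w, hw, hwm⟩ := claim _ hflipmem
  have h1 : Nat.card V < F (u.1, !u.2) + F w := hmatch _ _ hwm
  have h2 : F (u.1, u.2) + F (u.1, !u.2) = Nat.card V := hsum u.1 u.2
  have h3 : F w ≤ F u := hmaxu w (List.mem_toFinset.mpr hw)
  have h4 : F (u.1, u.2) = F u := by rw [Prod.mk.eta]
  omega
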